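/- Let λ, b, c, m be positive real numbers with 0 < mλ - b < b/c. Set A = λ(2cm² + b) - mb(1 + 2c), Δ₁ = A² + 4(b + cm²)·(b(1+c) - mcλ)·(mλ - b), u* = (A + √Δ₁)/(2(b + cm²)), and v* = u*(λ - u*)/(b - m(λ - u*)). Then u* > 0, v* > 0, and the pair (u*, v*) solves the system λ - u* - b·v*/(u* + m·v*) = 0 and 1 - v* + c·u*/(u* + m·v*) = 0. -/

import Mathlib

set_option maxHeartbeats 1000000 in
theorem positive_equilibrium_solves_system (lam b c m A Δ₁ uStar vStar : ℝ)
    (hlam : 0 < lam) (hb : 0 < b) (hc : 0 < c) (hm : 0 < m)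
    (h1 : 0 < m * lam - b) (h2 : m * lam - b < b / c)
    (hA : A = lam * (2 * c * m ^ 2 + b) - m * b * (1 + 2 * c))
    (hΔ : Δ₁ = A ^ 2 + 4 * (b + c * m ^ 2) * (b * (1 + c) - m * c * lam) * (m * lam - b))
    (hu : uStar = (A + Real.sqrt Δ₁) / (2 * (b + c * m ^ 2)))
    (hv : vStar = uStar * (lam - uStar) / (b - m * (lam - uStar))) :
    0 < uStar ∧ 0 < vStar ∧
    lam - uStar - b * vStar / (uStar + m * vStar) = 0 ∧
    1 - vStar + c * uStar / (uStar + m * vStar) = 0 := by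
  have hD : 0 < b + c * m ^ 2 := by positivity
  have hE : 0 < b * (1 + c) - m * c * lam := by
    have h2' : (m * lam - b) * c < b := (lt_div_iff₀ hc).mp h2
    nlinarith
  have hΔpos : A ^ 2 < Δ₁ := by nlinarith [mul_pos (mul_pos hD hE) h1]
  have hΔ0 : 0 ≤ Δ₁ := le_trans (sq_nonneg A) hΔpos.le
  set s := Real.sqrt Δ₁ with hs
  have hs2 : s ^ 2 = Δ₁ := Real.sq_sqrt hΔ0
  have hs0 : 0 ≤ s := Real.sqrt_nonneg _
  have hsA : -A < s := by nlinarith [sq_nonneg (s + A)]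
  have hupos : 0 < uStar := by
    rw [hu]; exact div_pos (by linarith) (by positivity)
  -- uStar satisfies the quadratic
  have hquad : (b + c * m ^ 2) * uStar ^ 2 - A * uStar
      - (b * (1 + c) - m * c * lam) * (m * lam - b) = 0 := by
    rw [hu]
    field_simp
    nlinarith [hs2]
  -- the denominator b - m (lam - uStar) is positive
  have hd : 0 < b - m * (lam - uStar) := by
    have key : m ^ 2 * Δ₁ - (2 * (b + c * m ^ 2) * (m * lam - b) - m * A) ^ 2
        = 4 * (b + c * m ^ 2) * (m * lam - b) * b ^ 2 := by
      rw [hΔ, hA]; ring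
    have h4 : 0 < 4 * (b + c * m ^ 2) * (m * lam - b) * b ^ 2 := by positivity
    have hkey : (2 * (b + c * m ^ 2) * (m * lam - b) - m * A) ^ 2 < (m * s) ^ 2 := by
      rw [mul_pow, hs2]; linarith
    have hms : 2 * (b + c * m ^ 2) * (m * lam - b) - m * A < m * s := by
      nlinarith [mul_nonneg hm.le hs0, hkey]
    have hu2 : 2 * (b + c * m ^ 2) * uStar = A + s := by
      rw [hu]; field_simp
    nlinarith [hms, hu2, hD]
  -- uStar < lam
  have hw : 0 < lam - uStar := by
    have key : (2 * (b + c * m ^ 2) * lam - A) ^ 2 - Δ₁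
        = 4 * (b + c * m ^ 2) * (b ^ 2 * (1 + c)) := by
      rw [hΔ, hA]; ring
    have h4 : 0 < 4 * (b + c * m ^ 2) * (b ^ 2 * (1 + c)) := by positivity
    have hr : 0 < 2 * (b + c * m ^ 2) * lam - A := by
      rw [hA]
      nlinarith [mul_pos hb hlam, mul_pos hm hb, mul_pos (mul_pos hm hb) hc]
    have hkey : s ^ 2 < (2 * (b + c * m ^ 2) * lam - A) ^ 2 := by
      rw [hs2]; linarith
    have hsr : s < 2 * (b + c * m ^ 2) * lam - A := by
      nlinarith [hs0, hkey]
    have hu2 : 2 * (b + c * m ^ 2) * uStar = A + s := by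
      rw [hu]; field_simp
    nlinarith [hsr, hu2, hD]
  have hvpos : 0 < vStar := by
    rw [hv]; exact div_pos (mul_pos hupos hw) hd
  -- key algebraic relation from the quadratic
  have hrel : uStar * (lam - uStar) * b
      = (b * (1 + c) - c * m * (lam - uStar)) * (b - m * (lam - uStar)) := by
    linear_combination -hquad - uStar * hA
  have hv' : vStar * (b - m * (lam - uStar)) = uStar * (lam - uStar) := by
    rw [hv]; exact div_mul_cancel₀ _ hd.ne'
  have hsum_eq : (uStar + m * vStar) * (b - m * (lam - uStar)) = uStar * b := by
    linear_combination m * hv'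
  have hsum_pos : 0 < uStar + m * vStar := by positivity
  refine ⟨hupos, hvpos, ?_, ?_⟩
  · have e1 : b * vStar / (uStar + m * vStar) = lam - uStar := by
      rw [div_eq_iff hsum_pos.ne']
      have h := mul_right_cancel₀ hd.ne' (show b * vStar * (b - m * (lam - uStar))
          = (lam - uStar) * (uStar + m * vStar) * (b - m * (lam - uStar)) by
        linear_combination b * hv' - (lam - uStar) * hsum_eq)
      linarith
    rw [e1]; ring
  · have hcu : c * uStar / (uStar + m * vStar) = c * (b - m * (lam - uStar)) / b := by
      rw [div_eq_div_iff hsum_pos.ne' hb.ne']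
      linear_combination -c * hsum_eq
    have hveq : vStar = (b + c * (b - m * (lam - uStar))) / b := by
      rw [hv, div_eq_div_iff hd.ne' hb.ne']
      linear_combination hrel
    rw [hcu, hveq]
    field_simp
    ring
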